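/- Integral representation of high derivatives of u/x near a boundary zero (the key identity in the proof of the higher-order Hardy inequality). Let s ≥ 0 be an integer, let u : [0,1] → ℝ be of class C^{s+1} with u(0) = 0. Then for every x ∈ (0,1], the s-th derivative of the function y ↦ u(y)/y, evaluated at x, equals x^{−(s+1)} · ∫₀^x y^s u^{(s+1)}(y) dy. In particular |(u/·)^{(s)}(x)| ≤ x^{−1} ∫₀^x |u^{(s+1)}(y)| dy for all x ∈ (0,1]. -/

import Mathlib

open Set MeasureTheory intervalIntegral

/-- projection of `ℝ` onto `[0,1]` -/
noncomputable def prj (y : ℝ) : ℝ := max 0 (min y 1)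

lemma prj_mem (y : ℝ) : prj y ∈ Icc (0:ℝ) 1 := by
  constructor
  · exact le_max_left _ _
  · simp only [prj, max_le_iff]
    exact ⟨zero_le_one, min_le_right _ _⟩

lemma prj_eq {y : ℝ} (hy : y ∈ Icc (0:ℝ) 1) : prj y = y := by
  simp only [prj, min_eq_left hy.2, max_eq_right hy.1]

lemma prj_cont : Continuous prj :=
  continuous_const.max (continuous_id.min continuous_const)

lemma hasDerivAt_iter (u : ℝ → ℝ) (n k : ℕ) (hk : k < n)
    (hu : ContDiffOn ℝ (n : ℕ∞) u (Icc (0:ℝ) 1)) {y : ℝ} (hy : y ∈ Ioo (0:ℝ) 1) :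
    HasDerivAt (iteratedDerivWithin k u (Icc (0:ℝ) 1))
      (iteratedDerivWithin (k+1) u (Icc (0:ℝ) 1) y) y := by
  have hT : UniqueDiffOn ℝ (Icc (0:ℝ) 1) := uniqueDiffOn_Icc zero_lt_one
  have hyT : y ∈ Icc (0:ℝ) 1 := Ioo_subset_Icc_self hy
  have hd : DifferentiableOn ℝ (iteratedDerivWithin k u (Icc (0:ℝ) 1)) (Icc (0:ℝ) 1) :=
    hu.differentiableOn_iteratedDerivWithin (by exact_mod_cast hk) hT
  have h1 : HasDerivWithinAt (iteratedDerivWithin k u (Icc (0:ℝ) 1))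
      (derivWithin (iteratedDerivWithin k u (Icc (0:ℝ) 1)) (Icc (0:ℝ) 1) y)
      (Icc (0:ℝ) 1) y := (hd y hyT).hasDerivWithinAt
  have h2 := h1.hasDerivAt (Icc_mem_nhds hy.1 hy.2)
  rwa [← iteratedDerivWithin_succ] at h2

lemma cont_iter (u : ℝ → ℝ) (n k : ℕ) (hk : k ≤ n)
    (hu : ContDiffOn ℝ (n : ℕ∞) u (Icc (0:ℝ) 1)) :
    ContinuousOn (iteratedDerivWithin k u (Icc (0:ℝ) 1)) (Icc (0:ℝ) 1) :=
  hu.continuousOn_iteratedDerivWithin (by exact_mod_cast hk) (uniqueDiffOn_Icc zero_lt_one)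

/-- integration by parts identity -/
lemma ibp (u : ℝ → ℝ) (s : ℕ)
    (hu : ContDiffOn ℝ ((s+2 : ℕ) : ℕ∞) u (Icc (0:ℝ) 1))
    {x : ℝ} (hx : x ∈ Ioc (0:ℝ) 1) :
    ∫ y in (0:ℝ)..x, y^(s+1) * iteratedDerivWithin (s+2) u (Icc (0:ℝ) 1) y
      = x^(s+1) * iteratedDerivWithin (s+1) u (Icc (0:ℝ) 1) x
        - (s+1 : ℝ) * ∫ y in (0:ℝ)..x, y^s * iteratedDerivWithin (s+1) u (Icc (0:ℝ) 1) y := by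
  set φ1 := iteratedDerivWithin (s+1) u (Icc (0:ℝ) 1) with hφ1
  set φ2 := iteratedDerivWithin (s+2) u (Icc (0:ℝ) 1) with hφ2
  have hIx : Icc (0:ℝ) x ⊆ Icc (0:ℝ) 1 := Icc_subset_Icc le_rfl hx.2
  have hux : uIcc (0:ℝ) x = Icc (0:ℝ) x := uIcc_of_le hx.1.le
  have hc1 : ContinuousOn φ1 (Icc (0:ℝ) x) := (cont_iter u (s+2) (s+1) (by omega) hu).mono hIx
  have hc2 : ContinuousOn φ2 (Icc (0:ℝ) x) := (cont_iter u (s+2) (s+2) le_rfl hu).mono hIx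
  have hi1 : IntervalIntegrable (fun y => y^s * φ1 y) volume 0 x := by
    apply ContinuousOn.intervalIntegrable
    rw [hux]; exact (continuousOn_pow s).mul hc1
  have hi2 : IntervalIntegrable (fun y => y^(s+1) * φ2 y) volume 0 x := by
    apply ContinuousOn.intervalIntegrable
    rw [hux]; exact (continuousOn_pow (s+1)).mul hc2
  have hi1' : IntervalIntegrable (fun y => (s+1:ℝ) * (y^s * φ1 y)) volume 0 x :=
    hi1.const_mul _
  -- FTC for G y = y^(s+1) * φ1 y
  have hG : ∫ y in (0:ℝ)..x, ((s+1:ℝ) * (y^s * φ1 y) + y^(s+1) * φ2 y)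
      = x^(s+1) * φ1 x - 0^(s+1) * φ1 0 := by
    apply integral_eq_sub_of_hasDeriv_right_of_le hx.1.le
    · exact (continuousOn_pow (s+1)).mul hc1
    · intro y hy
      have hy' : y ∈ Ioo (0:ℝ) 1 := ⟨hy.1, lt_of_lt_of_le hy.2 hx.2⟩
      have h1 : HasDerivAt (fun y : ℝ => y^(s+1)) ((s+1:ℝ) * y^s) y := by
        simpa using hasDerivAt_pow (s+1) y
      have h2 : HasDerivAt φ1 (φ2 y) y := hasDerivAt_iter u (s+2) (s+1) (by omega) hu hy'
      have := h1.mul h2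
      have heq : (s+1:ℝ) * y^s * φ1 y + y^(s+1) * φ2 y
          = (s+1:ℝ) * (y^s * φ1 y) + y^(s+1) * φ2 y := by ring
      exact (heq ▸ this).hasDerivWithinAt
    · exact hi1'.add hi2
  rw [integral_add hi1' hi2, intervalIntegral.integral_const_mul] at hG
  have h0 : (0:ℝ)^(s+1) = 0 := by simp
  rw [h0, zero_mul, sub_zero] at hG
  linarith [hG]

lemma key (u : ℝ → ℝ) (hu0 : u 0 = 0) :
    ∀ s : ℕ, ContDiffOn ℝ ((s+1 : ℕ) : ℕ∞) u (Icc (0:ℝ) 1) →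
    ∀ x ∈ Ioc (0:ℝ) 1,
      iteratedDerivWithin s (fun y => u y / y) (Ioc (0:ℝ) 1) x
        = (x ^ (s+1))⁻¹ *
            ∫ y in (0:ℝ)..x, y ^ s * iteratedDerivWithin (s+1) u (Icc (0:ℝ) 1) y := by
  intro s
  induction s with
  | zero =>
    intro hu x hx
    have hux : uIcc (0:ℝ) x = Icc (0:ℝ) x := uIcc_of_le hx.1.le
    have hIx : Icc (0:ℝ) x ⊆ Icc (0:ℝ) 1 := Icc_subset_Icc le_rfl hx.2
    have hFTC : ∫ y in (0:ℝ)..x, iteratedDerivWithin 1 u (Icc (0:ℝ) 1) y = u x - u 0 := by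
      apply integral_eq_sub_of_hasDeriv_right_of_le hx.1.le
      · exact hu.continuousOn.mono hIx
      · intro y hy
        have hy' : y ∈ Ioo (0:ℝ) 1 := ⟨hy.1, lt_of_lt_of_le hy.2 hx.2⟩
        have := hasDerivAt_iter u 1 0 zero_lt_one hu hy'
        rw [iteratedDerivWithin_zero] at this
        exact this.hasDerivWithinAt
      · apply ContinuousOn.intervalIntegrable
        rw [hux]; exact (cont_iter u 1 1 le_rfl hu).mono hIx
    simp only [iteratedDerivWithin_zero, pow_one, pow_zero, one_mul]
    rw [hFTC, hu0, sub_zero, div_eq_inv_mul, pow_succ, pow_zero, one_mul]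
  | succ s ih =>
    intro hu x hx
    have hu' : ContDiffOn ℝ ((s+1 : ℕ) : ℕ∞) u (Icc (0:ℝ) 1) :=
      hu.of_le (by exact_mod_cast Nat.le_succ (s+1))
    set S := Ioc (0:ℝ) 1 with hSdef
    set T := Icc (0:ℝ) 1 with hTdef
    set φ1 := iteratedDerivWithin (s+1) u T with hφ1
    set φ2 := iteratedDerivWithin (s+2) u T with hφ2
    set ψ := fun y : ℝ => y^s * φ1 y with hψ
    set ψe := fun y : ℝ => ψ (prj y) with hψe
    have hcψ : ContinuousOn ψ T := (continuousOn_pow s).mul (cont_iter u (s+2) (s+1) (by omega) hu)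
    have hcψe : Continuous ψe := hcψ.comp_continuous prj_cont prj_mem
    set Fe := fun z : ℝ => ∫ t in (0:ℝ)..z, ψe t with hFe
    set h := fun z : ℝ => Fe z / z^(s+1) with hh
    -- agreement of the two integrals on [0,1]
    have hint : ∀ z ∈ T, Fe z = ∫ t in (0:ℝ)..z, ψ t := by
      intro z hz
      apply integral_congr
      intro t ht
      rw [uIcc_of_le hz.1] at ht
      exact congrArg ψ (prj_eq (Icc_subset_Icc le_rfl hz.2 ht))
    have hEq : EqOn (iteratedDerivWithin s (fun y => u y / y) S) h S := by
      intro z hz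
      rw [ih hu' z hz, hh]
      simp only
      rw [hint z (Ioc_subset_Icc_self hz), div_eq_inv_mul]
    have hUx : UniqueDiffWithinAt ℝ S x := uniqueDiffOn_Ioc 0 1 x hx
    rw [iteratedDerivWithin_succ, derivWithin_congr hEq (hEq hx)]
    -- compute the derivative of h at x
    have hx0 : x ≠ 0 := ne_of_gt hx.1
    have hxp : x ^ (s+1) ≠ 0 := pow_ne_zero _ hx0
    have hFd : HasDerivAt Fe (ψe x) x :=
      (hcψe.integral_hasStrictDerivAt 0 x).hasDerivAt
    have hpd : HasDerivAt (fun z : ℝ => z^(s+1)) ((s+1:ℝ) * x^s) x := by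
      simpa using hasDerivAt_pow (s+1) x
    have hdiv : HasDerivAt h
        ((ψe x * x^(s+1) - Fe x * ((s+1:ℝ) * x^s)) / (x^(s+1))^2) x :=
      hFd.div hpd hxp
    rw [hdiv.hasDerivWithinAt.derivWithin hUx]
    -- final algebra
    have hxT : x ∈ T := Ioc_subset_Icc_self hx
    have hψex : ψe x = x^s * φ1 x := by rw [hψe]; simp only; rw [prj_eq hxT]
    have hFex : Fe x = ∫ t in (0:ℝ)..x, ψ t := hint x hxT
    have hibp := ibp u s (by exact_mod_cast hu) hx
    rw [hψex, hFex]
    rw [← hφ1, ← hφ2] at hibp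
    rw [show (s+1+1) = s+2 from rfl]
    rw [hibp]
    field_simp
    ring

/-- Integral representation of high derivatives of `u/x` near a boundary zero:
if `u` is `C^{s+1}` on `[0,1]` with `u 0 = 0`, then for `x ∈ (0,1]` the `s`-th
derivative of `y ↦ u y / y` at `x` equals `x^{-(s+1)} ∫₀^x y^s u^{(s+1)}(y) dy`,
and in particular `|(u/·)^{(s)}(x)| ≤ x⁻¹ ∫₀^x |u^{(s+1)}(y)| dy`. -/
theorem derivative_representation (s : ℕ) (u : ℝ → ℝ)
    (hu : ContDiffOn ℝ ((s : ℕ∞) + 1) u (Icc (0:ℝ) 1)) (hu0 : u 0 = 0) :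
    ∀ x ∈ Ioc (0:ℝ) 1,
      iteratedDerivWithin s (fun y => u y / y) (Ioc (0:ℝ) 1) x
          = (x ^ (s+1))⁻¹ *
              ∫ y in (0:ℝ)..x, y ^ s * iteratedDerivWithin (s+1) u (Icc (0:ℝ) 1) y
        ∧ |iteratedDerivWithin s (fun y => u y / y) (Ioc (0:ℝ) 1) x|
            ≤ x⁻¹ * ∫ y in (0:ℝ)..x, |iteratedDerivWithin (s+1) u (Icc (0:ℝ) 1) y| := by
  intro x hx
  have hu' : ContDiffOn ℝ ((s+1 : ℕ) : ℕ∞) u (Icc (0:ℝ) 1) := by exact_mod_cast hu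
  have hkey := key u hu0 s hu' x hx
  refine ⟨hkey, ?_⟩
  set φ := iteratedDerivWithin (s+1) u (Icc (0:ℝ) 1) with hφ
  have hx0 : 0 < x := hx.1
  have hux : uIcc (0:ℝ) x = Icc (0:ℝ) x := uIcc_of_le hx0.le
  have hIx : Icc (0:ℝ) x ⊆ Icc (0:ℝ) 1 := Icc_subset_Icc le_rfl hx.2
  have hcφ : ContinuousOn φ (Icc (0:ℝ) x) :=
    (cont_iter u (s+1) (s+1) le_rfl hu').mono hIx
  have hi1 : IntervalIntegrable (fun y => |y^s * φ y|) volume 0 x := by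
    apply ContinuousOn.intervalIntegrable
    rw [hux]; exact ((continuousOn_pow s).mul hcφ).abs
  have hi2 : IntervalIntegrable (fun y => x^s * |φ y|) volume 0 x := by
    apply ContinuousOn.intervalIntegrable
    rw [hux]; exact (continuousOn_const.mul hcφ.abs)
  have h1 : |∫ y in (0:ℝ)..x, y ^ s * φ y| ≤ ∫ y in (0:ℝ)..x, |y^s * φ y| :=
    abs_integral_le_integral_abs hx0.le
  have h2 : ∫ y in (0:ℝ)..x, |y^s * φ y| ≤ ∫ y in (0:ℝ)..x, x^s * |φ y| := by
    apply integral_mono_on hx0.le hi1 hi2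
    intro y hy
    rw [abs_mul, abs_of_nonneg (pow_nonneg hy.1 s)]
    exact mul_le_mul_of_nonneg_right (pow_le_pow_left₀ hy.1 hy.2 s) (abs_nonneg _)
  have h3 : ∫ y in (0:ℝ)..x, x^s * |φ y| = x^s * ∫ y in (0:ℝ)..x, |φ y| :=
    intervalIntegral.integral_const_mul _ _
  rw [hkey, abs_mul, abs_of_nonneg (inv_nonneg.mpr (pow_nonneg hx0.le _))]
  calc (x ^ (s+1))⁻¹ * |∫ y in (0:ℝ)..x, y ^ s * φ y|
      ≤ (x ^ (s+1))⁻¹ * (x^s * ∫ y in (0:ℝ)..x, |φ y|) := by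
        apply mul_le_mul_of_nonneg_left _ (inv_nonneg.mpr (pow_nonneg hx0.le _))
        exact le_trans h1 (h2.trans h3.le)
    _ = x⁻¹ * ∫ y in (0:ℝ)..x, |φ y| := by
        rw [pow_succ]
        field_simp
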